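/- arXiv:1912.02493 — 3 statements merged into one kernel-verified Lean document; each statement's English description precedes it below -/
import Mathlib

section
/- For every σ > 0 and every real z with 0 ≤ z ≤ 1, one has z² ≤ (1 / log(1 + 1/σ²)) · log(1 + z²/σ²). -/
/-- For σ > 0 and 0 ≤ z ≤ 1: z² ≤ (1 / log(1 + 1/σ²)) · log(1 + z²/σ²). -/
theorem sq_le_inv_log_mul_log (σ z : ℝ) (hσ : 0 < σ) (hz0 : 0 ≤ z) (hz1 : z ≤ 1) :
    z ^ 2 ≤ (1 / Real.log (1 + 1 / σ ^ 2)) * Real.log (1 + z ^ 2 / σ ^ 2) := by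
  have hσ2 : (0:ℝ) < σ ^ 2 := by positivity
  have ha : (0:ℝ) < 1 / σ ^ 2 := by positivity
  have hlogpos : 0 < Real.log (1 + 1 / σ ^ 2) := Real.log_pos (by linarith)
  have hz2 : 0 ≤ z ^ 2 := by positivity
  have hz21 : z ^ 2 ≤ 1 := by nlinarith
  have key : (1 + 1 / σ ^ 2) ^ (z ^ 2 : ℝ) ≤ 1 + z ^ 2 * (1 / σ ^ 2) :=
    rpow_one_add_le_one_add_mul_self (by linarith) hz2 hz21
  have h1 : z ^ 2 * Real.log (1 + 1 / σ ^ 2) ≤ Real.log (1 + z ^ 2 / σ ^ 2) := by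
    have := Real.log_le_log (by positivity) key
    rwa [Real.log_rpow (by linarith), mul_one_div] at this
  rw [div_mul_eq_mul_div, one_mul, le_div_iff₀ hlogpos]
  linarith
end

section
/- Suppose for all s in a finite set S_n: |f(s) − μ(s)| ≤ β^{1/2}·σ(s), and suppose s_n minimises μ(s) − β^{1/2}·σ(s) over a set containing c(s*), and |f(s*) − f(c(s*))| ≤ ε where c(s*) ∈ S_n. Then f(s_n) − f(s*) ≤ 2·β^{1/2}·σ(s_n) + ε. -/
/-- Core deterministic step of Lemma 1 (instantaneous regret of the LCB rule): if the
confidence bounds hold on S, s_n minimises the LCB over a set T containing c(s*), and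
the grid approximation error of f at s* is at most ε, then
f(s_n) − f(s*) ≤ 2·√β·σ(s_n) + ε. -/
theorem lcb_instantaneous_regret {α : Type*} (S T : Set α)
    (f μ σ' : α → ℝ) (β ε : ℝ) (hβ : 0 ≤ β) (hε : 0 ≤ ε)
    (hσ' : ∀ s, 0 ≤ σ' s)
    (hconc : ∀ s ∈ S, |f s - μ s| ≤ Real.sqrt β * σ' s)
    (sn sstar cstar : α) (hsn : sn ∈ S) (hcstar : cstar ∈ S) (hcT : cstar ∈ T)
    (hmin : ∀ s ∈ T, μ sn - Real.sqrt β * σ' sn ≤ μ s - Real.sqrt β * σ' s)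
    (happrox : |f sstar - f cstar| ≤ ε) :
    f sn - f sstar ≤ 2 * Real.sqrt β * σ' sn + ε := by
  have h1 := abs_le.mp (hconc sn hsn)
  have h2 := abs_le.mp (hconc cstar hcstar)
  have h3 := hmin cstar hcT
  have h4 := abs_le.mp happrox
  nlinarith [h1.1, h1.2, h2.1, h2.2, h4.1, h4.2]
end

section
/- Let K_n be the n×n Gram matrix of points s_1,...,s_n under a kernel k, and σ > 0. Define I_n = (1/2)·log det(I_n + σ^{-2}·K_n). Then I_n − I_{n-1} = (1/2)·log(1 + σ^{-2}·σ²_{n-1}(s_n)), where σ²_{n-1}(s_n) = k(s_n,s_n) − k_{n-1}(s_n)ᵀ(K_{n-1} + σ²I)^{-1}k_{n-1}(s_n) is the GP posterior variance at s_n given noisy observations at s_1,...,s_{n-1}. -/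
open Matrix

lemma aux_psd_smul {m : Type*} [Fintype m] {M : Matrix m m ℝ} (hM : M.PosSemidef)
    {c : ℝ} (hc : 0 ≤ c) : (c • M).PosSemidef := by
  refine posSemidef_iff_dotProduct_mulVec.mpr ⟨?_, fun x => ?_⟩
  · unfold Matrix.IsHermitian
    rw [conjTranspose_smul, hM.1]
    simp
  · rw [smul_mulVec, dotProduct_smul]
    exact mul_nonneg hc ((posSemidef_iff_dotProduct_mulVec.mp hM).2 x)

/-- Information gain increment identity (Lemma 5.4 of Srinivas et al.): with
I_n = (1/2)·log det(I + σ⁻²K_n), one has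
I_n − I_{n-1} = (1/2)·log(1 + σ⁻²·σ²_{n-1}(s_n)), where σ²_{n-1}(s_n) is the GP
posterior variance at the new point s_n. -/
theorem info_gain_increment {α : Type*} (k : α → α → ℝ) (n : ℕ) (s : Fin (n + 1) → α)
    (σ : ℝ) (hσ : 0 < σ)
    (Kfull : Matrix (Fin (n + 1)) (Fin (n + 1)) ℝ)
    (hKfull : Kfull = fun i j => k (s i) (s j))
    (hpsd : Kfull.PosSemidef)
    (Kprev : Matrix (Fin n) (Fin n) ℝ)
    (hKprev : Kprev = fun i j => k (s i.castSucc) (s j.castSucc))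
    (v : Fin n → ℝ) (hv : v = fun i => k (s i.castSucc) (s (Fin.last n))) :
    (1 / 2) * Real.log ((1 + (σ ^ 2)⁻¹ • Kfull).det)
      - (1 / 2) * Real.log ((1 + (σ ^ 2)⁻¹ • Kprev).det)
    = (1 / 2) * Real.log (1 + (σ ^ 2)⁻¹ *
        (k (s (Fin.last n)) (s (Fin.last n))
          - v ⬝ᵥ ((Kprev + σ ^ 2 • (1 : Matrix (Fin n) (Fin n) ℝ))⁻¹ *ᵥ v))) := by
  have hσ2 : (0:ℝ) < σ ^ 2 := by positivity
  set c := k (s (Fin.last n)) (s (Fin.last n)) with hc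
  -- Kprev is PSD
  have hKprev_sub : Kprev = Kfull.submatrix Fin.castSucc Fin.castSucc := by
    rw [hKprev, hKfull]; ext i j; rfl
  have hKprevPSD : Kprev.PosSemidef := hKprev_sub ▸ hpsd.submatrix _
  set M : Matrix (Fin (n+1)) (Fin (n+1)) ℝ := 1 + (σ ^ 2)⁻¹ • Kfull with hM
  set A : Matrix (Fin n) (Fin n) ℝ := 1 + (σ ^ 2)⁻¹ • Kprev with hA
  have hMpd : M.PosDef := by
    exact Matrix.PosDef.add_posSemidef Matrix.PosDef.one (aux_psd_smul hpsd (by positivity))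
  have hApd : A.PosDef := by
    exact Matrix.PosDef.add_posSemidef Matrix.PosDef.one (aux_psd_smul hKprevPSD (by positivity))
  set B : Matrix (Fin n) (Fin n) ℝ := Kprev + σ ^ 2 • (1 : Matrix (Fin n) (Fin n) ℝ) with hB
  have hBpd : B.PosDef := by
    show (Kprev + σ ^ 2 • (1 : Matrix (Fin n) (Fin n) ℝ)).PosDef
    refine Matrix.PosDef.posSemidef_add hKprevPSD ?_
    refine posDef_iff_dotProduct_mulVec.mpr ⟨?_, fun x hx => ?_⟩
    · unfold Matrix.IsHermitian
      rw [conjTranspose_smul, conjTranspose_one]; simp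
    · rw [smul_mulVec, dotProduct_smul, one_mulVec]
      exact mul_pos hσ2 (by simpa using dotProduct_star_self_pos_iff.mpr hx)
  have hBdet : IsUnit B.det := hBpd.det_pos.ne'.isUnit
  haveI : Invertible A := hApd.isUnit.invertible
  -- A⁻¹ = σ² • B⁻¹
  have hAB : A = (σ ^ 2)⁻¹ • B := by
    rw [hA, hB, smul_add, smul_smul, inv_mul_cancel₀ hσ2.ne', one_smul, add_comm]
  have hAinv : A⁻¹ = σ ^ 2 • B⁻¹ := by
    refine Matrix.inv_eq_right_inv ?_
    rw [hAB, Matrix.smul_mul, Matrix.mul_smul, smul_smul, inv_mul_cancel₀ hσ2.ne', one_smul,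
      Matrix.mul_nonsing_inv _ hBdet]
  -- block decomposition
  set Bcol : Matrix (Fin n) (Fin 1) ℝ := Matrix.of fun i _ => (σ ^ 2)⁻¹ * v i with hBcol
  set Crow : Matrix (Fin 1) (Fin n) ℝ := Matrix.of fun _ j => (σ ^ 2)⁻¹ * v j with hCrow
  set D : Matrix (Fin 1) (Fin 1) ℝ := Matrix.of fun _ _ => 1 + (σ ^ 2)⁻¹ * c with hD
  have hlast : ∀ i : Fin 1, finSumFinEquiv (Sum.inr i : Fin n ⊕ Fin 1) = Fin.last n := by
    intro i
    have : i = 0 := Subsingleton.elim _ _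
    subst this
    simp [finSumFinEquiv, Fin.ext_iff]
  have hcast : ∀ i : Fin n, finSumFinEquiv (Sum.inl i : Fin n ⊕ Fin 1) = i.castSucc := by
    intro i; simp [finSumFinEquiv, Fin.ext_iff]
  have hsym : ∀ j : Fin n, Kfull (Fin.last n) j.castSucc = v j := by
    intro j
    rw [← hpsd.1.apply, hKfull, hv]
    rfl
  have hMeq : M.submatrix finSumFinEquiv finSumFinEquiv = fromBlocks A Bcol Crow D := by
    ext i j
    rcases i with i | i <;> rcases j with j | j <;>
      simp only [Matrix.submatrix_apply, hlast, hcast, fromBlocks_apply₁₁, fromBlocks_apply₁₂,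
        fromBlocks_apply₂₁, fromBlocks_apply₂₂, hM, hA, hBcol, hCrow, hD, Matrix.add_apply,
        Matrix.smul_apply, Matrix.of_apply, smul_eq_mul]
    · rw [hKfull, hKprev]
      simp [Matrix.one_apply, Fin.castSucc_inj]
    · rw [hKfull, hv]
      have : i.castSucc ≠ Fin.last n := (Fin.castSucc_lt_last i).ne
      simp [Matrix.one_apply, this]
    · rw [hsym]
      have : Fin.last n ≠ j.castSucc := (Fin.castSucc_lt_last j).ne'
      simp [Matrix.one_apply, this]
    · rw [hKfull]
      simp [Matrix.one_apply, hc]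
  have hdetM : M.det = A.det * ((1 + (σ ^ 2)⁻¹ * c) - (Crow * A⁻¹ * Bcol) 0 0) := by
    rw [← Matrix.det_submatrix_equiv_self finSumFinEquiv M, hMeq, det_fromBlocks₁₁,
      invOf_eq_nonsing_inv]
    congr 1
    rw [Matrix.det_fin_one]
    simp [Matrix.sub_apply, hD]
  -- Schur complement computation
  have hquad : (Crow * A⁻¹ * Bcol) 0 0
      = (σ ^ 2)⁻¹ * (v ⬝ᵥ (B⁻¹ *ᵥ v)) := by
    rw [hAinv]
    simp only [Matrix.mul_apply, Matrix.smul_apply, Matrix.of_apply, hBcol, hCrow,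
      dotProduct, mulVec, smul_eq_mul, Finset.sum_mul, Finset.mul_sum]
    rw [Finset.sum_comm]
    refine Finset.sum_congr rfl fun i _ => ?_
    refine Finset.sum_congr rfl fun j _ => ?_
    field_simp
  have hx : M.det = A.det * (1 + (σ ^ 2)⁻¹ * (c - v ⬝ᵥ (B⁻¹ *ᵥ v))) := by
    rw [hdetM, hquad]; ring_nf
  have hAdet : (0:ℝ) < A.det := hApd.det_pos
  have hMdet : (0:ℝ) < M.det := hMpd.det_pos
  have hxpos : (0:ℝ) < 1 + (σ ^ 2)⁻¹ * (c - v ⬝ᵥ (B⁻¹ *ᵥ v)) := by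
    by_contra h
    push_neg at h
    nlinarith [hx]
  rw [hx, Real.log_mul hAdet.ne' hxpos.ne']
  ring
end
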